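/- Define F₀† = e^{−i(π/4) a_q† a_q} e^{i(π/4) a_p† a_p} e^{i(π/4) f_swap} e^{−i(π/2) a_q† a_q} on distinct fermionic modes p ≠ q. Then F₀† a_p† F₀ = (a_p† + a_q†)/√2 and F₀† a_q† F₀ = (a_p† − a_q†)/√2, i.e., F₀ implements a two-mode fermionic Fourier (Hadamard) transform on the creation operators. -/

import Mathlib

open Complex

set_option maxHeartbeats 4000000

lemma exp_idem' {A : Type*} [NormedRing A] [NormedAlgebra ℂ A] [CompleteSpace A]
    (x : A) (h : x * x = x) (c : ℂ) :
    NormedSpace.exp (c • x) = 1 + (Complex.exp c - 1) • x := by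
  have hxn : ∀ n : ℕ, x ^ (n + 1) = x := by
    intro n; induction n with
    | zero => simp
    | succ k ih => rw [pow_succ, ih, h]
  have hsum : Summable fun n : ℕ => ((n.factorial : ℂ))⁻¹ • (c • x) ^ n :=
    NormedSpace.expSeries_summable' (𝕂 := ℂ) (c • x)
  have hscal : Summable fun n : ℕ => ((n.factorial : ℂ))⁻¹ * c ^ n := by
    simpa [smul_eq_mul] using NormedSpace.expSeries_summable' (𝕂 := ℂ) (c : ℂ)
  have hscal' : Summable fun n : ℕ => (((n + 1).factorial : ℂ))⁻¹ * c ^ (n + 1) :=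
    (summable_nat_add_iff 1).2 hscal
  have hexpc : Complex.exp c = ∑' n : ℕ, ((n.factorial : ℂ))⁻¹ * c ^ n := by
    rw [Complex.exp_eq_exp_ℂ, NormedSpace.exp_eq_tsum (𝕂 := ℂ)]
    simp [smul_eq_mul]
  have htailscal : ∑' n : ℕ, (((n + 1).factorial : ℂ))⁻¹ * c ^ (n + 1) = Complex.exp c - 1 := by
    rw [hexpc, Summable.tsum_eq_zero_add hscal]
    simp
  rw [NormedSpace.exp_eq_tsum (𝕂 := ℂ)]
  beta_reduce
  rw [Summable.tsum_eq_zero_add hsum]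
  have hterm : ∀ n : ℕ, (((n + 1).factorial : ℂ))⁻¹ • (c • x) ^ (n + 1)
      = ((((n + 1).factorial : ℂ))⁻¹ * c ^ (n + 1)) • x := by
    intro n
    rw [smul_pow, hxn, smul_smul]
  simp only [hterm]
  rw [Summable.tsum_smul_const hscal', htailscal]
  simp

lemma exp_invol' {A : Type*} [NormedRing A] [NormedAlgebra ℂ A] [CompleteSpace A]
    (x : A) (h : x * x = 1) (c : ℂ) :
    NormedSpace.exp (c • x) = ((Complex.exp c + Complex.exp (-c)) / 2) • 1
      + ((Complex.exp c - Complex.exp (-c)) / 2) • x := by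
  set u : A := (2 : ℂ)⁻¹ • (1 + x) with hu
  set v : A := (2 : ℂ)⁻¹ • (1 - x) with hv
  have hu2 : u * u = u := by
    rw [hu]
    simp only [mul_add, add_mul, mul_sub, sub_mul, one_mul, mul_one,
      smul_mul_assoc, mul_smul_comm, smul_smul, h]
    match_scalars <;> norm_num
  have hv2 : v * v = v := by
    rw [hv]
    simp only [mul_add, add_mul, mul_sub, sub_mul, one_mul, mul_one,
      smul_mul_assoc, mul_smul_comm, smul_smul, h]
    match_scalars <;> norm_num
  have huv : u * v = 0 := by
    rw [hu, hv]
    simp only [mul_add, add_mul, mul_sub, sub_mul, one_mul, mul_one,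
      smul_mul_assoc, mul_smul_comm, smul_smul, h]
    match_scalars <;> norm_num
  have hvu : v * u = 0 := by
    rw [hu, hv]
    simp only [mul_add, add_mul, mul_sub, sub_mul, one_mul, mul_one,
      smul_mul_assoc, mul_smul_comm, smul_smul, h]
    match_scalars <;> norm_num
  have hcomm : Commute (c • u) ((-c) • v) :=
    Commute.smul_left (Commute.smul_right (huv.trans hvu.symm) _) _
  have hsplit : c • x = c • u + (-c) • v := by
    rw [hu, hv]
    match_scalars <;> ring
  rw [hsplit, NormedSpace.exp_add_of_commute_of_mem_ball (𝕂 := ℂ) hcomm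
    ((NormedSpace.expSeries_radius_eq_top ℂ A).symm ▸ edist_lt_top _ _)
    ((NormedSpace.expSeries_radius_eq_top ℂ A).symm ▸ edist_lt_top _ _), exp_idem' u hu2, exp_idem' v hv2]
  rw [hu, hv]
  simp only [mul_add, add_mul, mul_sub, sub_mul, one_mul, mul_one,
    smul_mul_assoc, mul_smul_comm, smul_smul, smul_add, smul_sub, h]
  match_scalars <;> ring_nf

/-- The two-mode fermionic Fourier (Hadamard) transform:
with `F₀† = e^{−i(π/4) n_q} e^{i(π/4) n_p} e^{i(π/4) f_swap} e^{−i(π/2) n_q}` and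
`F₀` its inverse, one has `F₀† a_p† F₀ = (a_p† + a_q†)/√2` and
`F₀† a_q† F₀ = (a_p† − a_q†)/√2`. -/
theorem two_mode_fourier_transform
    (A : Type*) [NormedRing A] [NormedAlgebra ℂ A] [CompleteSpace A]
    (ap aq apd aqd : A)
    (hpp : ap * apd + apd * ap = 1)
    (hqq : aq * aqd + aqd * aq = 1)
    (hpq : ap * aqd + aqd * ap = 0)
    (hqp : aq * apd + apd * aq = 0)
    (haa : ap * aq + aq * ap = 0)
    (hdd : apd * aqd + aqd * apd = 0)
    (hp2 : ap * ap = 0) (hq2 : aq * aq = 0)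
    (hpd2 : apd * apd = 0) (hqd2 : aqd * aqd = 0)
    (fswap np nq F0d F0 : A)
    (hfswap : fswap = 1 + apd * aq + aqd * ap - apd * ap - aqd * aq)
    (hnp : np = apd * ap) (hnq : nq = aqd * aq)
    (hF0d : F0d = NormedSpace.exp ((-(((Real.pi : ℂ) / 4) * Complex.I)) • nq)
        * NormedSpace.exp ((((Real.pi : ℂ) / 4) * Complex.I) • np)
        * NormedSpace.exp ((((Real.pi : ℂ) / 4) * Complex.I) • fswap)
        * NormedSpace.exp ((-(((Real.pi : ℂ) / 2) * Complex.I)) • nq))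
    (hF0 : F0 = NormedSpace.exp ((((Real.pi : ℂ) / 2) * Complex.I) • nq)
        * NormedSpace.exp ((-(((Real.pi : ℂ) / 4) * Complex.I)) • fswap)
        * NormedSpace.exp ((-(((Real.pi : ℂ) / 4) * Complex.I)) • np)
        * NormedSpace.exp ((((Real.pi : ℂ) / 4) * Complex.I) • nq)) :
    F0d * apd * F0 = ((Real.sqrt 2 : ℂ))⁻¹ • (apd + aqd)
    ∧ F0d * aqd * F0 = ((Real.sqrt 2 : ℂ))⁻¹ • (apd - aqd) := by
  -- anticommutation rewrite rules
  have rA : ap * apd = 1 - apd * ap := by rw [← hpp]; abel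
  have rB : aq * aqd = 1 - aqd * aq := by rw [← hqq]; abel
  have rC : ap * aqd = -(aqd * ap) := eq_neg_of_add_eq_zero_left hpq
  have rD : aq * apd = -(apd * aq) := eq_neg_of_add_eq_zero_left hqp
  have rE : aq * ap = -(ap * aq) := eq_neg_of_add_eq_zero_right haa
  have rF : aqd * apd = -(apd * aqd) := eq_neg_of_add_eq_zero_right hdd
  have rA' : ∀ z : A, ap * (apd * z) = z - apd * (ap * z) := fun z => by
    rw [← mul_assoc, rA, sub_mul, one_mul, mul_assoc]
  have rB' : ∀ z : A, aq * (aqd * z) = z - aqd * (aq * z) := fun z => by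
    rw [← mul_assoc, rB, sub_mul, one_mul, mul_assoc]
  have rC' : ∀ z : A, ap * (aqd * z) = -(aqd * (ap * z)) := fun z => by
    rw [← mul_assoc, rC, neg_mul, mul_assoc]
  have rD' : ∀ z : A, aq * (apd * z) = -(apd * (aq * z)) := fun z => by
    rw [← mul_assoc, rD, neg_mul, mul_assoc]
  have rE' : ∀ z : A, aq * (ap * z) = -(ap * (aq * z)) := fun z => by
    rw [← mul_assoc, rE, neg_mul, mul_assoc]
  have rF' : ∀ z : A, aqd * (apd * z) = -(apd * (aqd * z)) := fun z => by
    rw [← mul_assoc, rF, neg_mul, mul_assoc]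
  have wsp : ∀ z : A, ap * (ap * z) = 0 := fun z => by rw [← mul_assoc, hp2, zero_mul]
  have wsq : ∀ z : A, aq * (aq * z) = 0 := fun z => by rw [← mul_assoc, hq2, zero_mul]
  have wspd : ∀ z : A, apd * (apd * z) = 0 := fun z => by rw [← mul_assoc, hpd2, zero_mul]
  have wsqd : ∀ z : A, aqd * (aqd * z) = 0 := fun z => by rw [← mul_assoc, hqd2, zero_mul]
  -- idempotency / involution
  have hnp2 : np * np = np := by
    rw [hnp]
    simp only [mul_add, add_mul, mul_sub, sub_mul, mul_one, one_mul, mul_assoc,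
      rA, rB, rC, rD, rE, rF, rA', rB', rC', rD', rE', rF',
      wsp, wsq, wspd, wsqd, hp2, hq2, hpd2, hqd2,
      neg_mul, mul_neg, neg_neg, zero_mul, mul_zero, neg_zero,
      add_zero, zero_add, sub_zero, zero_sub, sub_neg_eq_add]
  have hnq2 : nq * nq = nq := by
    rw [hnq]
    simp only [mul_add, add_mul, mul_sub, sub_mul, mul_one, one_mul, mul_assoc,
      rA, rB, rC, rD, rE, rF, rA', rB', rC', rD', rE', rF',
      wsp, wsq, wspd, wsqd, hp2, hq2, hpd2, hqd2,
      neg_mul, mul_neg, neg_neg, zero_mul, mul_zero, neg_zero,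
      add_zero, zero_add, sub_zero, zero_sub, sub_neg_eq_add]
  have hf2 : fswap * fswap = 1 := by
    rw [hfswap]
    simp only [mul_add, add_mul, mul_sub, sub_mul, mul_one, one_mul, mul_assoc,
      rA, rB, rC, rD, rE, rF, rA', rB', rC', rD', rE', rF',
      wsp, wsq, wspd, wsqd, hp2, hq2, hpd2, hqd2,
      neg_mul, mul_neg, neg_neg, zero_mul, mul_zero, neg_zero,
      add_zero, zero_add, sub_zero, zero_sub, sub_neg_eq_add]
    abel
  -- scalar exponential values
  have e1 : Complex.exp ((Real.pi : ℂ) / 4 * Complex.I)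
      = (Real.sqrt 2 : ℂ) / 2 + (Real.sqrt 2 : ℂ) / 2 * Complex.I := by
    rw [show ((Real.pi : ℂ) / 4 * Complex.I) = ((Real.pi / 4 : ℝ) : ℂ) * Complex.I by
        push_cast; ring,
      Complex.exp_mul_I, ← Complex.ofReal_cos, ← Complex.ofReal_sin,
      Real.cos_pi_div_four, Real.sin_pi_div_four]
    push_cast; ring
  have e2 : Complex.exp (-((Real.pi : ℂ) / 4 * Complex.I))
      = (Real.sqrt 2 : ℂ) / 2 - (Real.sqrt 2 : ℂ) / 2 * Complex.I := by
    rw [show (-((Real.pi : ℂ) / 4 * Complex.I)) = ((-(Real.pi / 4) : ℝ) : ℂ) * Complex.I by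
        push_cast; ring,
      Complex.exp_mul_I, ← Complex.ofReal_cos, ← Complex.ofReal_sin,
      Real.cos_neg, Real.sin_neg, Real.cos_pi_div_four, Real.sin_pi_div_four]
    push_cast; ring
  have e3 : Complex.exp ((Real.pi : ℂ) / 2 * Complex.I) = Complex.I := by
    rw [show ((Real.pi : ℂ) / 2 * Complex.I) = ((Real.pi / 2 : ℝ) : ℂ) * Complex.I by
        push_cast; ring,
      Complex.exp_mul_I, ← Complex.ofReal_cos, ← Complex.ofReal_sin,
      Real.cos_pi_div_two, Real.sin_pi_div_two]
    push_cast; ring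
  have e4 : Complex.exp (-((Real.pi : ℂ) / 2 * Complex.I)) = -Complex.I := by
    rw [show (-((Real.pi : ℂ) / 2 * Complex.I)) = ((-(Real.pi / 2) : ℝ) : ℂ) * Complex.I by
        push_cast; ring,
      Complex.exp_mul_I, ← Complex.ofReal_cos, ← Complex.ofReal_sin,
      Real.cos_neg, Real.sin_neg, Real.cos_pi_div_two, Real.sin_pi_div_two]
    push_cast; ring
  -- sqrt 2 facts
  have hs : (Real.sqrt 2 : ℂ) * (Real.sqrt 2 : ℂ) = 2 := by
    norm_cast
    rw [Real.mul_self_sqrt (by norm_num)]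
  have hs0 : (Real.sqrt 2 : ℂ) ≠ 0 := by
    intro hcon
    rw [hcon, mul_zero] at hs
    norm_num at hs
  have hinv : ((Real.sqrt 2 : ℝ) : ℂ)⁻¹ = (Real.sqrt 2 : ℂ) / 2 := by
    field_simp
    linear_combination -hs
  have hs2 : (Real.sqrt 2 : ℂ) ^ 2 = 2 := by rw [sq]; exact hs
  have hs3 : (Real.sqrt 2 : ℂ) ^ 3 = 2 * (Real.sqrt 2 : ℂ) := by
    rw [pow_succ, hs2]
  have hs4 : (Real.sqrt 2 : ℂ) ^ 4 = 4 := by rw [pow_succ, hs3]; linear_combination 2 * hs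
  have hs5 : (Real.sqrt 2 : ℂ) ^ 5 = 4 * (Real.sqrt 2 : ℂ) := by rw [pow_succ, hs4]
  have hs6 : (Real.sqrt 2 : ℂ) ^ 6 = 8 := by rw [pow_succ, hs5]; linear_combination 4 * hs
  have hs7 : (Real.sqrt 2 : ℂ) ^ 7 = 8 * (Real.sqrt 2 : ℂ) := by rw [pow_succ, hs6]
  have hs8 : (Real.sqrt 2 : ℂ) ^ 8 = 16 := by rw [pow_succ, hs7]; linear_combination 8 * hs
  have hI3 : Complex.I ^ 3 = -Complex.I := by
    rw [pow_succ, Complex.I_sq]; ring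
  have hI4 : Complex.I ^ 4 = 1 := by
    rw [pow_succ, hI3]; simp [Complex.I_mul_I]
  -- explicit normal forms of F0d and F0
  have hP : F0d = ((Real.sqrt 2 : ℂ) / 2 * (1 + Complex.I)) • (1 : A)
      + ((1 - (Real.sqrt 2 : ℂ)) / 2 * (1 + Complex.I)) • (apd * ap)
      + ((1 : ℂ) / 2 * (1 + Complex.I)) • (aqd * ap)
      + ((1 : ℂ) / 2 * (1 + Complex.I)) • (apd * aq)
      + (-((1 + (Real.sqrt 2 : ℂ)) / 2) * (1 + Complex.I)) • (aqd * aq) := by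
    rw [hF0d]
    simp only [exp_idem' nq hnq2, exp_idem' np hnp2, exp_invol' fswap hf2, neg_neg,
      e1, e2, e3, e4]
    rw [hnp, hnq, hfswap]
    simp only [mul_add, add_mul, mul_sub, sub_mul, mul_one, one_mul, mul_assoc,
      smul_mul_assoc, mul_smul_comm, smul_smul, smul_add, smul_sub, smul_neg,
      rA, rB, rC, rD, rE, rF, rA', rB', rC', rD', rE', rF',
      wsp, wsq, wspd, wsqd, hp2, hq2, hpd2, hqd2,
      neg_mul, mul_neg, neg_neg, zero_mul, mul_zero, neg_zero, smul_zero, zero_smul,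
      add_zero, zero_add, sub_zero, zero_sub, sub_neg_eq_add]
    match_scalars <;>
      (ring_nf;
       try simp only [hs2, hs3, hs4, hs5, hs6, hs7, hs8, Complex.I_sq, hI3, hI4];
       try ring_nf;
       try simp only [hs2, hs3, hs4, hs5, hs6, hs7, hs8, Complex.I_sq, hI3, hI4];
       try ring_nf)
  have hQ : F0 = ((Real.sqrt 2 : ℂ) / 2 * (1 - Complex.I)) • (1 : A)
      + ((1 - (Real.sqrt 2 : ℂ)) / 2 * (1 - Complex.I)) • (apd * ap)
      + ((1 : ℂ) / 2 * (1 - Complex.I)) • (aqd * ap)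
      + ((1 : ℂ) / 2 * (1 - Complex.I)) • (apd * aq)
      + (-((1 + (Real.sqrt 2 : ℂ)) / 2) * (1 - Complex.I)) • (aqd * aq) := by
    rw [hF0]
    simp only [exp_idem' nq hnq2, exp_idem' np hnp2, exp_invol' fswap hf2, neg_neg,
      e1, e2, e3, e4]
    rw [hnp, hnq, hfswap]
    simp only [mul_add, add_mul, mul_sub, sub_mul, mul_one, one_mul, mul_assoc,
      smul_mul_assoc, mul_smul_comm, smul_smul, smul_add, smul_sub, smul_neg,
      rA, rB, rC, rD, rE, rF, rA', rB', rC', rD', rE', rF',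
      wsp, wsq, wspd, wsqd, hp2, hq2, hpd2, hqd2,
      neg_mul, mul_neg, neg_neg, zero_mul, mul_zero, neg_zero, smul_zero, zero_smul,
      add_zero, zero_add, sub_zero, zero_sub, sub_neg_eq_add]
    match_scalars <;>
      (ring_nf;
       try simp only [hs2, hs3, hs4, hs5, hs6, hs7, hs8, Complex.I_sq, hI3, hI4];
       try ring_nf;
       try simp only [hs2, hs3, hs4, hs5, hs6, hs7, hs8, Complex.I_sq, hI3, hI4];
       try ring_nf)
  rw [hP, hQ, hinv]
  constructor
  · simp only [mul_add, add_mul, mul_sub, sub_mul, mul_one, one_mul, mul_assoc,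
      smul_mul_assoc, mul_smul_comm, smul_smul, smul_add, smul_sub, smul_neg,
      rA, rB, rC, rD, rE, rF, rA', rB', rC', rD', rE', rF',
      wsp, wsq, wspd, wsqd, hp2, hq2, hpd2, hqd2,
      neg_mul, mul_neg, neg_neg, zero_mul, mul_zero, neg_zero, smul_zero, zero_smul,
      add_zero, zero_add, sub_zero, zero_sub, sub_neg_eq_add]
    match_scalars <;>
      (ring_nf;
       try simp only [hs2, hs3, hs4, hs5, hs6, hs7, hs8, Complex.I_sq, hI3, hI4];
       try ring_nf;
       try simp only [hs2, hs3, hs4, hs5, hs6, hs7, hs8, Complex.I_sq, hI3, hI4];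
       try ring_nf)
  · simp only [mul_add, add_mul, mul_sub, sub_mul, mul_one, one_mul, mul_assoc,
      smul_mul_assoc, mul_smul_comm, smul_smul, smul_add, smul_sub, smul_neg,
      rA, rB, rC, rD, rE, rF, rA', rB', rC', rD', rE', rF',
      wsp, wsq, wspd, wsqd, hp2, hq2, hpd2, hqd2,
      neg_mul, mul_neg, neg_neg, zero_mul, mul_zero, neg_zero, smul_zero, zero_smul,
      add_zero, zero_add, sub_zero, zero_sub, sub_neg_eq_add]
    match_scalars <;>
      (ring_nf;
       try simp only [hs2, hs3, hs4, hs5, hs6, hs7, hs8, Complex.I_sq, hI3, hI4];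
       try ring_nf;
       try simp only [hs2, hs3, hs4, hs5, hs6, hs7, hs8, Complex.I_sq, hI3, hI4];
       try ring_nf)
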